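/- The kernel of the map D : F_q[X,Y] → F_q[X,Y], D(f) = X^q ∂f/∂X + Y^q ∂f/∂Y, is exactly the subring F_q[X^p, Y^p, θ_q], where θ_q = X^q Y − X Y^q and p is the characteristic of F_q. -/

import Mathlib

open MvPolynomial Finset

/-- The Serre operator `D f = X^q ∂f/∂X + Y^q ∂f/∂Y` on `F_q[X, Y]`. -/
noncomputable def serreD (F : Type*) [Field F] [Fintype F] :
    MvPolynomial (Fin 2) F → MvPolynomial (Fin 2) F :=
  fun f => X 0 ^ Fintype.card F * pderiv 0 f + X 1 ^ Fintype.card F * pderiv 1 f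

namespace SerreAux
variable {F : Type*} [Field F] [Fintype F]


theorem coeff_pderiv (i : Fin 2) (f : MvPolynomial (Fin 2) F) (d : Fin 2 →₀ ℕ) :
    coeff d (pderiv i f) = ((d i + 1 : ℕ) : F) * coeff (d + Finsupp.single i 1) f := by
  induction f using MvPolynomial.induction_on' with
  | add p q hp hq => simp [hp, hq, mul_add]
  | monomial s a =>
    rw [pderiv_monomial, coeff_monomial, coeff_monomial]
    by_cases h : s = d + Finsupp.single i 1
    · subst h
      have h2 : (d + Finsupp.single i (1:ℕ)) i = d i + 1 := by simp
      rw [add_tsub_cancel_right, if_pos rfl, if_pos rfl, h2]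
      push_cast; ring
    · rw [if_neg h]
      by_cases h2 : s - Finsupp.single i 1 = d
      · by_cases h3 : s i = 0
        · rw [if_pos h2, h3]; simp
        · exfalso; apply h
          ext j
          have hj2 := DFunLike.congr_fun h2 j
          simp only [Finsupp.tsub_apply] at hj2
          by_cases hj : i = j
          · subst hj
            simp only [Finsupp.add_apply, Finsupp.single_eq_same] at hj2 ⊢
            omega
          · simp only [Finsupp.add_apply, Finsupp.single_apply, if_neg hj] at hj2 ⊢
            omega
      · rw [if_neg h2]; ring

theorem pderiv_comm' (f : MvPolynomial (Fin 2) F) :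
    pderiv 0 (pderiv 1 f) = pderiv 1 (pderiv 0 f) := by
  ext d
  rw [coeff_pderiv, coeff_pderiv, coeff_pderiv, coeff_pderiv]
  have e1 : (d + Finsupp.single 0 1) + Finsupp.single 1 1
      = (d + Finsupp.single 1 1) + Finsupp.single 0 1 := by rw [add_right_comm]
  have e2 : ((d + Finsupp.single 1 1 : Fin 2 →₀ ℕ)) 0 = d 0 := by
    simp [Finsupp.single_apply]
  have e3 : ((d + Finsupp.single 0 1 : Fin 2 →₀ ℕ)) 1 = d 1 := by
    simp [Finsupp.single_apply]
  rw [e1, e2, e3]; ring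

theorem totalDegree_pderiv_le (i : Fin 2) (f : MvPolynomial (Fin 2) F) :
    (pderiv i f).totalDegree ≤ f.totalDegree := by
  apply Finset.sup_le
  intro d hd
  rw [mem_support_iff, coeff_pderiv] at hd
  have h1 : d + Finsupp.single i 1 ∈ f.support := by
    rw [mem_support_iff]; intro h; rw [h, mul_zero] at hd; exact hd rfl
  calc (d.sum fun _ e => e) ≤ ((d + Finsupp.single i 1).sum fun _ e => e) := by
        rw [Finsupp.sum_add_index' (fun _ => rfl) (fun _ _ _ => rfl)]
        simp
    _ ≤ f.totalDegree := le_totalDegree h1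




/-- exponents-divisible implies pderiv zero -/
theorem pderiv_eq_zero_of_dvd {p : ℕ} [CharP F p] (i : Fin 2) (f : MvPolynomial (Fin 2) F)
    (h : ∀ d ∈ f.support, p ∣ d i) : pderiv i f = 0 := by
  ext d
  rw [coeff_pderiv, coeff_zero]
  by_cases hs : d + Finsupp.single i 1 ∈ f.support
  · have hd := h _ hs
    have : ((d + Finsupp.single i 1 : Fin 2 →₀ ℕ)) i = d i + 1 := by simp
    rw [this] at hd
    rw [(CharP.cast_eq_zero_iff F p _).mpr hd, zero_mul]
  · rw [notMem_support_iff] at hs; rw [hs, mul_zero]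

/-- pderiv zero implies exponents divisible -/
theorem dvd_of_pderiv_eq_zero {p : ℕ} [CharP F p] (i : Fin 2) (f : MvPolynomial (Fin 2) F)
    (h : pderiv i f = 0) : ∀ d ∈ f.support, p ∣ d i := by
  intro d hd
  by_contra hnd
  have h1 : d i ≠ 0 := by rintro h0; exact hnd (h0 ▸ dvd_zero p)
  have he : (d - Finsupp.single i 1) + Finsupp.single i 1 = d := by
    ext j
    by_cases hj : i = j
    · subst hj; simp only [Finsupp.add_apply, Finsupp.tsub_apply, Finsupp.single_eq_same]; omega
    · simp only [Finsupp.add_apply, Finsupp.tsub_apply, Finsupp.single_apply, if_neg hj]; omega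
  have hc := coeff_pderiv i f (d - Finsupp.single i 1)
  rw [h, coeff_zero, he] at hc
  have hei : (d - Finsupp.single i (1:ℕ)) i + 1 = d i := by
    simp only [Finsupp.tsub_apply, Finsupp.single_eq_same]; omega
  rw [hei] at hc
  have : ((d i : ℕ) : F) ≠ 0 := by
    rw [Ne, CharP.cast_eq_zero_iff F p]; exact hnd
  rw [mem_support_iff] at hd
  exact hd ((mul_eq_zero.mp hc.symm).resolve_left this)

theorem monomial_fin2 (d : Fin 2 →₀ ℕ) (c : F) :
    monomial d c = C c * X 0 ^ (d 0) * X 1 ^ (d 1) := by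
  have hd : d = Finsupp.single 0 (d 0) + Finsupp.single 1 (d 1) := by
    ext j; fin_cases j <;> simp [Finsupp.single_apply]
  rw [X_pow_eq_monomial, X_pow_eq_monomial, C_mul_monomial, monomial_mul]
  rw [mul_one, mul_one]
  exact hd ▸ rfl

/-- exponents divisible → membership in F[X^p, Y^p] -/
theorem mem_adjoinA_of_dvd {p : ℕ} (hp : 0 < p) {f : MvPolynomial (Fin 2) F}
    (h : ∀ d ∈ f.support, p ∣ d 0 ∧ p ∣ d 1) :
    f ∈ Algebra.adjoin F ({X 0 ^ p, X 1 ^ p} : Set (MvPolynomial (Fin 2) F)) := by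
  rw [f.as_sum]
  apply Subalgebra.sum_mem
  intro d hd
  obtain ⟨a, ha⟩ := (h d hd).1
  obtain ⟨b, hb⟩ := (h d hd).2
  rw [monomial_fin2, ha, hb, pow_mul, pow_mul]
  exact mul_mem (mul_mem (Subalgebra.algebraMap_mem _ _)
    (pow_mem (Algebra.subset_adjoin (by simp)) a))
    (pow_mem (Algebra.subset_adjoin (by simp)) b)

/-- membership in F[X^p, Y^p] → exponents divisible -/
theorem dvd_of_mem_adjoinA {p : ℕ} {f : MvPolynomial (Fin 2) F}
    (h : f ∈ Algebra.adjoin F ({X 0 ^ p, X 1 ^ p} : Set (MvPolynomial (Fin 2) F))) :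
    ∀ d ∈ f.support, p ∣ d 0 ∧ p ∣ d 1 := by
  classical
  induction h using Algebra.adjoin_induction with
  | mem x hx =>
    rcases hx with hx | hx <;> subst hx <;>
    · intro d hd
      rw [X_pow_eq_monomial] at hd
      have := support_monomial_subset hd
      rw [Finset.mem_singleton] at this
      subst this
      constructor <;> simp [Finsupp.single_apply]
  | algebraMap r =>
    intro d hd
    rw [show (algebraMap F (MvPolynomial (Fin 2) F)) r = monomial 0 r by
      rw [MvPolynomial.algebraMap_eq, C_apply]] at hd
    have := support_monomial_subset hd
    rw [Finset.mem_singleton] at this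
    subst this; simp
  | add x y hx hy ihx ihy =>
    intro d hd
    have := support_add hd
    rw [Finset.mem_union] at this
    rcases this with h | h
    exacts [ihx d h, ihy d h]
  | mul x y hx hy ihx ihy =>
    intro d hd
    have := support_mul x y hd
    rw [Finset.mem_add] at this
    obtain ⟨d1, hd1, d2, hd2, rfl⟩ := this
    obtain ⟨h10, h11⟩ := ihx d1 hd1
    obtain ⟨h20, h21⟩ := ihy d2 hd2
    constructor <;> simp only [Finsupp.add_apply] <;> exact dvd_add ‹_› ‹_›



theorem AB_pow (q a b : ℕ) :
    ((X 0 ^ q * X 1 : MvPolynomial (Fin 2) F)) ^ a * (X 0 * X 1 ^ q) ^ b =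
      monomial (Finsupp.single 0 (q*a+b) + Finsupp.single 1 (a+q*b)) 1 := by
  have he : (Finsupp.single (0 : Fin 2) (q*a) + Finsupp.single 1 a) +
      (Finsupp.single 0 b + Finsupp.single 1 (q*b)) =
      Finsupp.single 0 (q*a+b) + Finsupp.single 1 (a+q*b) := by
    ext j
    fin_cases j <;> simp [Finsupp.single_apply] <;> ring
  rw [mul_pow, mul_pow, ← pow_mul, ← pow_mul, X_pow_eq_monomial, X_pow_eq_monomial,
    X_pow_eq_monomial, X_pow_eq_monomial, monomial_mul, monomial_mul, monomial_mul, he]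
  norm_num

theorem term_support (q k m : ℕ) (d : Fin 2 →₀ ℕ)
    (h : coeff d ((-1)^(m+k) * ((X 0 ^ q * X 1 : MvPolynomial (Fin 2) F))^m *
      (X 0 * X 1 ^ q)^(k-m) * (k.choose m : MvPolynomial (Fin 2) F)) ≠ 0) :
    d 1 = m + q * (k - m) := by
  have hrw : ((-1)^(m+k) * ((X 0 ^ q * X 1 : MvPolynomial (Fin 2) F))^m *
      (X 0 * X 1 ^ q)^(k-m) * (k.choose m : MvPolynomial (Fin 2) F)) =
      monomial (Finsupp.single 0 (q*m+(k-m)) + Finsupp.single 1 (m+q*(k-m)))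
        ((-1)^(m+k) * (k.choose m : F)) := by
    rw [mul_assoc ((-1)^(m+k)), AB_pow]
    rw [show ((-1 : MvPolynomial (Fin 2) F))^(m+k) = C ((-1 : F)^(m+k)) by
      rw [map_pow, map_neg, map_one]]
    rw [show ((k.choose m : MvPolynomial (Fin 2) F)) = C ((k.choose m : F)) by
      rw [map_natCast C]]
    rw [C_mul_monomial, mul_comm _ (C ((k.choose m : F))), C_mul_monomial]
    congr 1
    ring
  rw [hrw, coeff_monomial] at h
  split_ifs at h with he
  · rw [← he]
    simp [Finsupp.single_apply]
  · exact absurd rfl h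

theorem sum_term_support (q k j : ℕ) (d : Fin 2 →₀ ℕ)
    (hd : d ∈ (∑ m ∈ range j, ((-1)^(m+k) * ((X 0 ^ q * X 1 : MvPolynomial (Fin 2) F))^m *
      (X 0 * X 1 ^ q)^(k-m) * (k.choose m : MvPolynomial (Fin 2) F))).support) :
    ∃ m < j, d 1 = m + q * (k - m) := by
  rw [mem_support_iff, coeff_sum] at hd
  obtain ⟨m, hm, hne⟩ := Finset.exists_ne_zero_of_sum_ne_zero hd
  exact ⟨m, Finset.mem_range.mp hm, term_support q k m d hne⟩

theorem theta_pow_support (q k : ℕ) (d : Fin 2 →₀ ℕ)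
    (hd : d ∈ ((X 0 ^ q * X 1 - X 0 * X 1 ^ q : MvPolynomial (Fin 2) F) ^ k).support) :
    ∃ m ≤ k, d 1 = m + q * (k - m) := by
  rw [sub_pow] at hd
  obtain ⟨m, hm, h⟩ := sum_term_support q k (k+1) d hd
  exact ⟨m, by omega, h⟩

theorem theta_pow_split (q p : ℕ) (hp : 2 ≤ p) :
    (X 0 ^ q * X 1 - X 0 * X 1 ^ q : MvPolynomial (Fin 2) F) ^ (p-1) =
      X 0 ^ (q*(p-1)) * X 1 ^ (p-1) +
      ∑ m ∈ range (p-1), ((-1)^(m+(p-1)) * ((X 0 ^ q * X 1 : MvPolynomial (Fin 2) F))^m *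
        (X 0 * X 1 ^ q)^((p-1)-m) * ((p-1).choose m : MvPolynomial (Fin 2) F)) := by
  rw [sub_pow]
  rw [show p - 1 + 1 = (p-1) + 1 from rfl, Finset.sum_range_succ]
  rw [add_comm]
  congr 1
  rw [Nat.sub_self, pow_zero, Nat.choose_self, Nat.cast_one, mul_one, mul_one]
  rw [show (-1 : MvPolynomial (Fin 2) F)^((p-1)+(p-1)) = 1 by
    rw [Even.neg_one_pow ⟨p-1, rfl⟩]]
  rw [one_mul, mul_pow, ← pow_mul]




theorem card_cast_zero : ((Fintype.card F : ℕ) : MvPolynomial (Fin 2) F) = 0 := by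
  rw [← map_natCast (C : F →+* MvPolynomial (Fin 2) F), Nat.cast_card_eq_zero, map_zero]

theorem pderiv0_theta :
    pderiv 0 (X 0 ^ Fintype.card F * X 1 - X 0 * X 1 ^ Fintype.card F : MvPolynomial (Fin 2) F)
      = -(X 1 ^ Fintype.card F) := by
  simp [pderiv_mul, pderiv_pow, card_cast_zero]

theorem pderiv1_theta :
    pderiv 1 (X 0 ^ Fintype.card F * X 1 - X 0 * X 1 ^ Fintype.card F : MvPolynomial (Fin 2) F)
      = X 0 ^ Fintype.card F := by
  simp [pderiv_mul, pderiv_pow, card_cast_zero]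

theorem backward {p : ℕ} (hp : p.Prime) [CharP F p]
    (f : MvPolynomial (Fin 2) F)
    (hf : f ∈ Algebra.adjoin F
        ({X 0 ^ p, X 1 ^ p,
          X 0 ^ Fintype.card F * X 1 - X 0 * X 1 ^ Fintype.card F} :
          Set (MvPolynomial (Fin 2) F))) : serreD F f = 0 := by
  induction hf using Algebra.adjoin_induction with
  | mem x hx =>
    have hpz : ((p : ℕ) : MvPolynomial (Fin 2) F) = 0 := by
      rw [← map_natCast (C : F →+* MvPolynomial (Fin 2) F), CharP.cast_eq_zero, map_zero]
    simp only [Set.mem_insert_iff, Set.mem_singleton_iff] at hx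
    rcases hx with rfl | rfl | rfl
    · simp [serreD, pderiv_pow, hpz]
    · simp [serreD, pderiv_pow, hpz]
    · simp only [serreD, pderiv0_theta, pderiv1_theta]
      ring
  | algebraMap r =>
    simp only [serreD, MvPolynomial.algebraMap_eq, pderiv_C]
    simp
  | add x y hx hy ihx ihy =>
    simp only [serreD] at *
    rw [map_add, map_add]
    linear_combination ihx + ihy
  | mul x y hx hy ihx ihy =>
    simp only [serreD] at *
    rw [pderiv_mul, pderiv_mul]
    linear_combination y * ihx + x * ihy


theorem X0_pow_ne_zero (q : ℕ) : (X 0 ^ q : MvPolynomial (Fin 2) F) ≠ 0 :=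
  pow_ne_zero _ (X_ne_zero 0)

theorem totalDegree_X0_pow_mul (q : ℕ) {h : MvPolynomial (Fin 2) F} (hh : h ≠ 0) :
    q + h.totalDegree ≤ (X 0 ^ q * h).totalDegree := by
  obtain ⟨d, hd, hsup⟩ := Finset.exists_mem_eq_sup h.support
    (support_nonempty.mpr hh) (fun s => s.sum fun _ e => e)
  have he : Finsupp.single 0 q + d ∈ (X 0 ^ q * h).support := by
    rw [mem_support_iff, X_pow_eq_monomial, coeff_monomial_mul, one_mul]
    exact mem_support_iff.mp hd
  have := le_totalDegree he
  rw [Finsupp.sum_add_index' (fun _ => rfl) (fun _ _ _ => rfl)] at this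
  rw [Finsupp.sum_single_index rfl] at this
  rw [totalDegree, hsup]
  exact this

theorem exists_h {f : MvPolynomial (Fin 2) F} (hf : serreD F f = 0)
    (h1 : pderiv 1 f ≠ 0) :
    ∃ h : MvPolynomial (Fin 2) F, h ≠ 0 ∧
      pderiv 1 f = X 0 ^ Fintype.card F * h ∧
      pderiv 0 f = -(X 1 ^ Fintype.card F * h) ∧
      serreD F h = 0 ∧
      h.totalDegree < f.totalDegree := by
  set q := Fintype.card F with hqdef
  have hD : X 0 ^ q * pderiv 0 f = -(X 1 ^ q * pderiv 1 f) := by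
    simp only [serreD] at hf
    linear_combination hf
  -- the remainder vanishes
  have hM : (pderiv 1 f).modMonomial (Finsupp.single 0 q) = 0 := by
    ext d
    rw [coeff_zero]
    by_cases hle : Finsupp.single 0 q ≤ d
    · rw [coeff_modMonomial_of_le _ hle]
    · rw [coeff_modMonomial_of_not_le _ hle]
      have e1 : coeff (Finsupp.single 1 q + d) (X 1 ^ q * pderiv 1 f) = coeff d (pderiv 1 f) := by
        rw [X_pow_eq_monomial, coeff_monomial_mul, one_mul]
      have e2 : coeff (Finsupp.single 1 q + d) (X 0 ^ q * pderiv 0 f) = 0 := by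
        rw [X_pow_eq_monomial, coeff_monomial_mul', if_neg]
        intro hc
        apply hle
        rw [Finsupp.single_le_iff] at hc ⊢
        simpa using hc
      have := congrArg (coeff (Finsupp.single 1 q + d)) hD
      rw [e2, coeff_neg, e1] at this
      exact neg_eq_zero.mp this.symm
  set h := (pderiv 1 f).divMonomial (Finsupp.single 0 q) with hh
  have hX : pderiv 1 f = X 0 ^ q * h := by
    conv_lhs => rw [← divMonomial_add_modMonomial (pderiv 1 f) (Finsupp.single 0 q)]
    rw [hM, add_zero, X_pow_eq_monomial]
  have hne : h ≠ 0 := by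
    intro h0
    rw [h0, mul_zero] at hX
    exact h1 hX
  have hf0 : pderiv 0 f = -(X 1 ^ q * h) := by
    apply mul_left_cancel₀ (X0_pow_ne_zero q)
    rw [hD, hX]
    ring
  have hker : serreD F h = 0 := by
    have hcomm := pderiv_comm' f
    rw [hX, hf0] at hcomm
    rw [map_neg, pderiv_mul, pderiv_mul] at hcomm
    have z0 : pderiv 0 (X 0 ^ q : MvPolynomial (Fin 2) F) = 0 := by
      rw [pderiv_pow, hqdef, card_cast_zero]
      ring
    have z1 : pderiv 1 (X 1 ^ q : MvPolynomial (Fin 2) F) = 0 := by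
      rw [pderiv_pow, hqdef, card_cast_zero]
      ring
    have z2 : pderiv 0 (X 1 ^ q : MvPolynomial (Fin 2) F) = 0 := by
      rw [pderiv_pow]
      simp
    have z3 : pderiv 1 (X 0 ^ q : MvPolynomial (Fin 2) F) = 0 := by
      rw [pderiv_pow]
      simp
    rw [z0, z1] at hcomm
    simp only [serreD, ← hqdef]
    linear_combination hcomm
  have hdeg : h.totalDegree < f.totalDegree := by
    have d1 : (pderiv 1 f).totalDegree ≤ f.totalDegree := totalDegree_pderiv_le 1 f
    have d2 : q + h.totalDegree ≤ (X 0 ^ q * h).totalDegree := totalDegree_X0_pow_mul q hne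
    rw [← hX] at d2
    have hq1 : 1 ≤ q := Fintype.card_pos
    omega
  exact ⟨h, hne, hX, hf0, hker, hdeg⟩
theorem mul_class {p : ℕ} {c g : MvPolynomial (Fin 2) F}
    (hc : ∀ d ∈ c.support, p ∣ d 1) (d : Fin 2 →₀ ℕ) (hd : d ∈ (c * g).support) :
    ∃ e ∈ g.support, d 1 % p = e 1 % p := by
  classical
  have hmem := support_mul c g hd
  rw [Finset.mem_add] at hmem
  obtain ⟨d1, hd1, d2, hd2, rfl⟩ := hmem
  refine ⟨d2, hd2, ?_⟩
  obtain ⟨a, ha⟩ := hc d1 hd1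
  simp only [Finsupp.add_apply]
  rw [ha, Nat.mul_add_mod]

theorem mod_eq {p q : ℕ} (hpq : p ∣ q) {m : ℕ} (hm : m < p) (r : ℕ) :
    (m + q * r) % p = m := by
  obtain ⟨t, rfl⟩ := hpq
  rw [mul_assoc, Nat.add_mul_mod_self_left, Nat.mod_eq_of_lt hm]

theorem no_top_class {p : ℕ} (hp : p.Prime) [CharP F p] {f h : MvPolynomial (Fin 2) F} {q : ℕ}
    (hf : pderiv 1 f = X 0 ^ q * h) :
    ∀ d ∈ h.support, d 1 % p ≠ p - 1 := by
  intro d hd hcl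
  have h2 := hp.two_le
  have he : coeff (Finsupp.single 0 q + d) (X 0 ^ q * h) = coeff d h := by
    rw [X_pow_eq_monomial, coeff_monomial_mul, one_mul]
  have hsup : coeff (Finsupp.single 0 q + d) (pderiv 1 f) ≠ 0 := by
    rw [hf, he]; exact mem_support_iff.mp hd
  rw [coeff_pderiv] at hsup
  have h1 : ((Finsupp.single 0 q + d : Fin 2 →₀ ℕ)) 1 = d 1 := by
    simp [Finsupp.single_apply]
  have hdvd : p ∣ d 1 + 1 := by
    apply Nat.dvd_of_mod_eq_zero
    rw [Nat.add_mod, hcl, Nat.mod_eq_of_lt (show 1 < p by omega),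
      Nat.sub_add_cancel (by omega), Nat.mod_self]
  apply hsup
  rw [h1, (CharP.cast_eq_zero_iff F p _).mpr hdvd, zero_mul]

theorem top_coeff_zero {p : ℕ} (hp : p.Prime) [CharP F p] (hpq : p ∣ Fintype.card F)
    (c : ℕ → MvPolynomial (Fin 2) F)
    (hcA : ∀ k, ∀ d ∈ (c k).support, p ∣ d 0 ∧ p ∣ d 1)
    (hclass : ∀ d ∈ (∑ k ∈ range p, c k *
      (X 0 ^ Fintype.card F * X 1 - X 0 * X 1 ^ Fintype.card F) ^ k).support,
      d 1 % p ≠ p - 1) :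
    c (p - 1) = 0 := by
  classical
  have h2 := hp.two_le
  set q := Fintype.card F with hqdef
  set θ : MvPolynomial (Fin 2) F := X 0 ^ q * X 1 - X 0 * X 1 ^ q with hθ
  set μ : MvPolynomial (Fin 2) F := X 0 ^ (q*(p-1)) * X 1 ^ (p-1) with hμ
  set ρ : MvPolynomial (Fin 2) F := ∑ m ∈ range (p-1),
    ((-1)^(m+(p-1)) * ((X 0 ^ q * X 1 : MvPolynomial (Fin 2) F))^m *
      (X 0 * X 1 ^ q)^((p-1)-m) * ((p-1).choose m : MvPolynomial (Fin 2) F)) with hρ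
  have hsplit : θ^(p-1) = μ + ρ := theta_pow_split q p h2
  have hp1 : p - 1 + 1 = p := by omega
  have key : c (p-1) * μ =
      (∑ k ∈ range p, c k * θ^k) - (∑ k ∈ range (p-1), c k * θ^k) - c (p-1) * ρ := by
    have hsum : (∑ k ∈ range p, c k * θ^k)
        = (∑ k ∈ range (p-1), c k * θ^k) + c (p-1) * θ^(p-1) := by
      conv_lhs => rw [← hp1]
      rw [Finset.sum_range_succ]
    rw [hsum, hsplit]
    ring
  have hzero : c (p-1) * μ = 0 := by
    rw [eq_zero_iff]
    intro d
    by_cases hcl : d 1 % p = p - 1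
    · rw [key, coeff_sub, coeff_sub]
      have z1 : coeff d (∑ k ∈ range p, c k * θ^k) = 0 := by
        rw [← notMem_support_iff]
        intro hmem
        exact hclass d hmem hcl
      have z2 : coeff d (∑ k ∈ range (p-1), c k * θ^k) = 0 := by
        rw [coeff_sum]
        apply Finset.sum_eq_zero
        intro k hk
        rw [Finset.mem_range] at hk
        rw [← notMem_support_iff]
        intro hmem
        obtain ⟨e, he, hde⟩ := mul_class (fun d hd => (hcA k d hd).2) d hmem
        obtain ⟨m, hm, he1⟩ := theta_pow_support q k e he
        rw [he1, mod_eq hpq (by omega) _] at hde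
        omega
      have z3 : coeff d (c (p-1) * ρ) = 0 := by
        rw [← notMem_support_iff]
        intro hmem
        obtain ⟨e, he, hde⟩ := mul_class (fun d hd => (hcA (p-1) d hd).2) d hmem
        obtain ⟨m, hm, he1⟩ := sum_term_support q (p-1) (p-1) e he
        rw [he1, mod_eq hpq (by omega) _] at hde
        omega
      rw [z1, z2, z3]
      ring
    · rw [← notMem_support_iff]
      intro hmem
      apply hcl
      obtain ⟨e, he, hde⟩ := mul_class (fun d hd => (hcA (p-1) d hd).2) d hmem
      have hμm : μ = monomial (Finsupp.single 0 (q*(p-1)) + Finsupp.single 1 (p-1)) (1 : F) := by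
        rw [hμ, X_pow_eq_monomial, X_pow_eq_monomial, monomial_mul, mul_one]
      rw [hμm] at he
      have := support_monomial_subset he
      rw [Finset.mem_singleton] at this
      subst this
      have he1 : ((Finsupp.single (0:Fin 2) (q*(p-1)) + Finsupp.single 1 (p-1) : Fin 2 →₀ ℕ)) 1
          = p - 1 := by simp [Finsupp.single_apply]
      rw [hde, he1, Nat.mod_eq_of_lt (by omega)]
  have hμne : μ ≠ 0 := by
    have hμm : μ = monomial (Finsupp.single 0 (q*(p-1)) + Finsupp.single 1 (p-1)) (1 : F) := by
      rw [hμ, X_pow_eq_monomial, X_pow_eq_monomial, monomial_mul, mul_one]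
    rw [hμm, Ne, monomial_eq_zero]
    exact one_ne_zero
  exact (mul_eq_zero.mp hzero).resolve_right hμne
theorem support_C_mul_subset (a : F) (x : MvPolynomial (Fin 2) F) :
    (C a * x).support ⊆ x.support := by
  classical
  intro d hd
  have hmem := support_mul _ _ hd
  rw [Finset.mem_add] at hmem
  obtain ⟨d1, hd1, d2, hd2, rfl⟩ := hmem
  rw [C_apply] at hd1
  have := support_monomial_subset hd1
  rw [Finset.mem_singleton] at this
  subst this
  rwa [zero_add]

theorem pderiv_sum_theta {p : ℕ} (hp : p.Prime) [CharP F p] (i : Fin 2)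
    (c : ℕ → MvPolynomial (Fin 2) F) (hc : ∀ k, pderiv i (c k) = 0)
    (m : ℕ) (hm : m ≤ p - 1) :
    pderiv i (∑ k ∈ range m, C (((k+1 : ℕ) : F))⁻¹ * c k *
        (X 0 ^ Fintype.card F * X 1 - X 0 * X 1 ^ Fintype.card F) ^ (k+1))
      = pderiv i (X 0 ^ Fintype.card F * X 1 - X 0 * X 1 ^ Fintype.card F) *
        ∑ k ∈ range m, c k * (X 0 ^ Fintype.card F * X 1 - X 0 * X 1 ^ Fintype.card F) ^ k := by
  rw [map_sum, Finset.mul_sum]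
  apply Finset.sum_congr rfl
  intro k hk
  rw [Finset.mem_range] at hk
  have hne : (((k+1 : ℕ) : F)) ≠ 0 := by
    rw [Ne, CharP.cast_eq_zero_iff F p]
    intro hdvd
    have := Nat.le_of_dvd (by omega) hdvd
    have := hp.two_le
    omega
  have hv : C (((k+1 : ℕ) : F))⁻¹ * C (((k+1 : ℕ) : F)) = (1 : MvPolynomial (Fin 2) F) := by
    rw [← map_mul, inv_mul_cancel₀ hne, map_one]
  rw [pderiv_mul, pderiv_C_mul, hc k, mul_zero, zero_mul, zero_add]
  rw [pderiv_pow]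
  rw [show ((k+1 : ℕ) : MvPolynomial (Fin 2) F) = C (((k+1 : ℕ) : F)) from (map_natCast C _).symm]
  rw [Nat.add_sub_cancel]
  linear_combination (c k * (X 0 ^ Fintype.card F * X 1 - X 0 * X 1 ^ Fintype.card F) ^ k *
    pderiv i (X 0 ^ Fintype.card F * X 1 - X 0 * X 1 ^ Fintype.card F)) * hv

theorem exact_ker_rep {p n : ℕ} (hp : p.Prime) [CharP F p] (hq : Fintype.card F = p ^ n) :
    ∀ N : ℕ, ∀ h : MvPolynomial (Fin 2) F, h.totalDegree ≤ N → serreD F h = 0 →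
    (∃ f, pderiv 1 f = X 0 ^ Fintype.card F * h) →
    ∃ c : ℕ → MvPolynomial (Fin 2) F,
      (∀ k, ∀ d ∈ (c k).support, p ∣ d 0 ∧ p ∣ d 1) ∧
      h = ∑ k ∈ range (p-1), c k *
        (X 0 ^ Fintype.card F * X 1 - X 0 * X 1 ^ Fintype.card F) ^ k := by
  have h2 := hp.two_le
  have hq2 : 1 < Fintype.card F := Fintype.one_lt_card
  have hn : n ≠ 0 := by rintro rfl; rw [pow_zero] at hq; omega
  have hpq : p ∣ Fintype.card F := hq ▸ dvd_pow_self p hn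
  intro N
  induction N using Nat.strong_induction_on with
  | _ N IH =>
  intro h hdeg hker hex
  by_cases hz : pderiv 1 h = 0
  · have hz0 : pderiv 0 h = 0 := by
      simp only [serreD] at hker
      rw [hz, mul_zero, add_zero] at hker
      exact (mul_eq_zero.mp hker).resolve_left (X0_pow_ne_zero _)
    refine ⟨fun k => if k = 0 then h else 0, ?_, ?_⟩
    · intro k d hd
      by_cases hk : k = 0
      · subst hk; simp only [if_pos rfl] at hd
        exact ⟨dvd_of_pderiv_eq_zero 0 h hz0 d hd, dvd_of_pderiv_eq_zero 1 h hz d hd⟩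
      · simp only [if_neg hk] at hd; simp at hd
    · rw [Finset.sum_eq_single_of_mem 0 (Finset.mem_range.mpr (by omega))]
      · simp
      · intro k _ hk
        simp only [if_neg hk, zero_mul]
  · obtain ⟨h', hne, hX, hf0, hker', hdeg'⟩ := exists_h hker hz
    obtain ⟨c', hc'A, hrep⟩ := IH h'.totalDegree (by omega) h' le_rfl hker' ⟨h, hX⟩
    have hc'0 : ∀ k, pderiv 0 (c' k) = 0 :=
      fun k => pderiv_eq_zero_of_dvd 0 _ (fun d hd => (hc'A k d hd).1)
    have hc'1 : ∀ k, pderiv 1 (c' k) = 0 :=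
      fun k => pderiv_eq_zero_of_dvd 1 _ (fun d hd => (hc'A k d hd).2)
    set θ : MvPolynomial (Fin 2) F :=
      X 0 ^ Fintype.card F * X 1 - X 0 * X 1 ^ Fintype.card F with hθ
    set g : MvPolynomial (Fin 2) F :=
      ∑ k ∈ range (p-1), C (((k+1 : ℕ) : F))⁻¹ * c' k * θ^(k+1) with hg
    have hg0 : pderiv 0 g = -(X 1 ^ Fintype.card F * h') := by
      rw [hg, pderiv_sum_theta hp 0 c' hc'0 (p-1) le_rfl, pderiv0_theta, ← hθ, ← hrep]
      ring
    have hg1 : pderiv 1 g = X 0 ^ Fintype.card F * h' := by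
      rw [hg, pderiv_sum_theta hp 1 c' hc'1 (p-1) le_rfl, pderiv1_theta, ← hθ, ← hrep]
    have hβ0 : pderiv 0 (h - g) = 0 := by rw [map_sub, hf0, hg0, sub_self]
    have hβ1 : pderiv 1 (h - g) = 0 := by rw [map_sub, hX, hg1, sub_self]
    set c : ℕ → MvPolynomial (Fin 2) F :=
      fun k => if k = 0 then h - g else C (((k : ℕ) : F))⁻¹ * c' (k-1) with hc
    have hcA : ∀ k, ∀ d ∈ (c k).support, p ∣ d 0 ∧ p ∣ d 1 := by
      intro k d hd
      by_cases hk : k = 0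
      · rw [hc, hk] at hd; simp only [if_pos rfl] at hd
        exact ⟨dvd_of_pderiv_eq_zero 0 _ hβ0 d hd, dvd_of_pderiv_eq_zero 1 _ hβ1 d hd⟩
      · rw [hc] at hd; simp only [if_neg hk] at hd
        exact hc'A (k-1) d (support_C_mul_subset _ _ hd)
    have hp1 : p - 1 + 1 = p := by omega
    have hrepP : h = ∑ k ∈ range p, c k * θ^k := by
      have hsum : ∑ k ∈ range p, c k * θ^k
          = (∑ k ∈ range (p-1), c (k+1) * θ^(k+1)) + c 0 * θ^0 := by
        conv_lhs => rw [← hp1]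
        rw [Finset.sum_range_succ']
      rw [hsum]
      have e0 : c 0 * θ^0 = h - g := by rw [hc]; simp
      have e1 : ∀ k, c (k+1) * θ^(k+1) = C (((k+1 : ℕ) : F))⁻¹ * c' k * θ^(k+1) := by
        intro k
        rw [hc]
        simp only [if_neg (Nat.succ_ne_zero k), Nat.add_sub_cancel]
      rw [e0]
      rw [Finset.sum_congr rfl (fun k _ => e1 k), ← hg]
      ring
    obtain ⟨f, hf⟩ := hex
    have hclass : ∀ d ∈ (∑ k ∈ range p, c k * θ^k).support, d 1 % p ≠ p - 1 := by
      rw [← hrepP]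
      exact no_top_class hp hf
    have htop : c (p-1) = 0 := top_coeff_zero hp hpq c hcA hclass
    refine ⟨c, hcA, ?_⟩
    rw [hrepP]
    have hsum : ∑ k ∈ range p, c k * θ^k
        = (∑ k ∈ range (p-1), c k * θ^k) + c (p-1) * θ^(p-1) := by
      conv_lhs => rw [← hp1]
      rw [Finset.sum_range_succ]
    rw [hsum, htop, zero_mul, add_zero]
theorem forward {p n : ℕ} (hp : p.Prime) [CharP F p] (hq : Fintype.card F = p ^ n)
    (f : MvPolynomial (Fin 2) F) (hf : serreD F f = 0) :
    f ∈ Algebra.adjoin F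
        ({X 0 ^ p, X 1 ^ p,
          X 0 ^ Fintype.card F * X 1 - X 0 * X 1 ^ Fintype.card F} :
          Set (MvPolynomial (Fin 2) F)) := by
  have h2 := hp.two_le
  have hmono : Algebra.adjoin F ({X 0 ^ p, X 1 ^ p} : Set (MvPolynomial (Fin 2) F)) ≤
      Algebra.adjoin F
        ({X 0 ^ p, X 1 ^ p,
          X 0 ^ Fintype.card F * X 1 - X 0 * X 1 ^ Fintype.card F} :
          Set (MvPolynomial (Fin 2) F)) := by
    apply Algebra.adjoin_mono
    intro x hx
    simp only [Set.mem_insert_iff, Set.mem_singleton_iff] at hx ⊢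
    tauto
  by_cases hz : pderiv 1 f = 0
  · have hz0 : pderiv 0 f = 0 := by
      simp only [serreD] at hf
      rw [hz, mul_zero, add_zero] at hf
      exact (mul_eq_zero.mp hf).resolve_left (X0_pow_ne_zero _)
    exact hmono (mem_adjoinA_of_dvd (by omega) (fun d hd =>
      ⟨dvd_of_pderiv_eq_zero 0 f hz0 d hd, dvd_of_pderiv_eq_zero 1 f hz d hd⟩))
  · obtain ⟨h, hne, hX, hf0, hker, _⟩ := exists_h hf hz
    obtain ⟨c, hcA, hrep⟩ := exact_ker_rep hp hq h.totalDegree h le_rfl hker ⟨f, hX⟩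
    have hc0 : ∀ k, pderiv 0 (c k) = 0 :=
      fun k => pderiv_eq_zero_of_dvd 0 _ (fun d hd => (hcA k d hd).1)
    have hc1 : ∀ k, pderiv 1 (c k) = 0 :=
      fun k => pderiv_eq_zero_of_dvd 1 _ (fun d hd => (hcA k d hd).2)
    set θ : MvPolynomial (Fin 2) F :=
      X 0 ^ Fintype.card F * X 1 - X 0 * X 1 ^ Fintype.card F with hθ
    set g : MvPolynomial (Fin 2) F :=
      ∑ k ∈ range (p-1), C (((k+1 : ℕ) : F))⁻¹ * c k * θ^(k+1) with hg
    have hg0 : pderiv 0 g = -(X 1 ^ Fintype.card F * h) := by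
      rw [hg, pderiv_sum_theta hp 0 c hc0 (p-1) le_rfl, pderiv0_theta, ← hθ, ← hrep]
      ring
    have hg1 : pderiv 1 g = X 0 ^ Fintype.card F * h := by
      rw [hg, pderiv_sum_theta hp 1 c hc1 (p-1) le_rfl, pderiv1_theta, ← hθ, ← hrep]
    have hβ0 : pderiv 0 (f - g) = 0 := by rw [map_sub, hf0, hg0, sub_self]
    have hβ1 : pderiv 1 (f - g) = 0 := by rw [map_sub, hX, hg1, sub_self]
    have hβmem : f - g ∈ Algebra.adjoin F
        ({X 0 ^ p, X 1 ^ p,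
          X 0 ^ Fintype.card F * X 1 - X 0 * X 1 ^ Fintype.card F} :
          Set (MvPolynomial (Fin 2) F)) :=
      hmono (mem_adjoinA_of_dvd (by omega) (fun d hd =>
        ⟨dvd_of_pderiv_eq_zero 0 _ hβ0 d hd, dvd_of_pderiv_eq_zero 1 _ hβ1 d hd⟩))
    have hθmem : θ ∈ Algebra.adjoin F
        ({X 0 ^ p, X 1 ^ p,
          X 0 ^ Fintype.card F * X 1 - X 0 * X 1 ^ Fintype.card F} :
          Set (MvPolynomial (Fin 2) F)) := by
      apply Algebra.subset_adjoin
      simp only [Set.mem_insert_iff, Set.mem_singleton_iff]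
      tauto
    have hgmem : g ∈ Algebra.adjoin F
        ({X 0 ^ p, X 1 ^ p,
          X 0 ^ Fintype.card F * X 1 - X 0 * X 1 ^ Fintype.card F} :
          Set (MvPolynomial (Fin 2) F)) := by
      rw [hg]
      apply Subalgebra.sum_mem
      intro k _
      refine mul_mem (mul_mem ?_ ?_) (pow_mem hθmem _)
      · rw [show (C (((k+1 : ℕ) : F))⁻¹ : MvPolynomial (Fin 2) F)
            = algebraMap F (MvPolynomial (Fin 2) F) (((k+1 : ℕ) : F))⁻¹ from rfl]
        exact Subalgebra.algebraMap_mem _ _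
      · exact hmono (mem_adjoinA_of_dvd (by omega) (hcA k))
    have : f = (f - g) + g := by ring
    rw [this]
    exact add_mem hβmem hgmem
end SerreAux

/-- The kernel of `D : F_q[X, Y] → F_q[X, Y]` is exactly the subring
`F_q[X^p, Y^p, θ_q]`, where `θ_q = X^q Y − X Y^q` and `p` is the characteristic. -/
theorem serreD_ker (F : Type*) [Field F] [Fintype F] (p n : ℕ) (hp : p.Prime)
    [CharP F p] (hq : Fintype.card F = p ^ n) (f : MvPolynomial (Fin 2) F) :
    serreD F f = 0 ↔
      f ∈ Algebra.adjoin F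
        ({X 0 ^ p, X 1 ^ p,
          X 0 ^ Fintype.card F * X 1 - X 0 * X 1 ^ Fintype.card F} :
          Set (MvPolynomial (Fin 2) F)) :=
  ⟨SerreAux.forward hp hq f, SerreAux.backward hp f⟩
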